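/- Assume L(ε) stabilizes at k ≥ 0. Then the formal power series φ(ε) := Σ_{i≥0} ε^i·φ_i transforms L(ε) into the triangular form S(ε) := L(ε)·φ(ε) = Σ_{l≥0} ε^l·S_{l+1}; that is, Σ_{i+j=l} L_i∘φ_j = S_{l+1} for every l ≥ 0. Moreover, for 1 ≤ i ≤ k+1 one has S_i(N_0^c + ⋯ + N_{i−1}^c) ⊆ R_{i−1}^c (with N_0^c := {0}), S_i(N_i^c) = R_i and S_i vanishes on N_i; for every l ≥ 2 the range of S_{k+l} is contained in R_{k+1}^c and S_{k+l} vanishes on N_{k+1}; and S_i vanishes on N_{k+1} for every i ≥ 1. -/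

import Mathlib

private lemma icc_split_aux {X : Type*} [AddCommMonoid X] (f : ℕ → X) {a b c : ℕ}
    (h1 : a ≤ b + 1) (h2 : b ≤ c) :
    ∑ v ∈ Finset.Icc a c, f v
      = (∑ v ∈ Finset.Icc a b, f v) + ∑ v ∈ Finset.Icc (b + 1) c, f v := by
  rw [← Finset.Ico_add_one_right_eq_Icc a c, ← Finset.Ico_add_one_right_eq_Icc a b, ← Finset.Ico_add_one_right_eq_Icc (b+1) c]
  exact (Finset.sum_Ico_consecutive f h1 (by omega)).symm

private lemma icc_shift_aux {X : Type*} [AddCommMonoid X] (f : ℕ → X) (a b : ℕ) :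
    ∑ v ∈ Finset.Icc (a + 1) (b + 1), f v = ∑ v ∈ Finset.Icc a b, f (v + 1) := by
  rw [← Finset.map_add_right_Icc a b 1, Finset.sum_map]
  rfl

private lemma range_split_zero_aux {X : Type*} [AddCommMonoid X] (f : ℕ → X) (n : ℕ) :
    ∑ i ∈ Finset.range (n + 1), f i = f 0 + ∑ i ∈ Finset.Icc 1 n, f i := by
  rw [Finset.range_eq_Ico, ← Finset.Ico_add_one_right_eq_Icc 1 n,
    ← Finset.sum_Ico_consecutive f (by omega : 0 ≤ 1) (by omega : 1 ≤ n + 1)]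
  congr 1
  rw [Nat.Ico_zero_eq_range, Finset.sum_range_one]

private lemma lm_sum_comp {R : Type*} [Semiring R] {M₁ M₂ M₃ : Type*}
    [AddCommMonoid M₁] [AddCommMonoid M₂] [AddCommMonoid M₃]
    [Module R M₁] [Module R M₂] [Module R M₃]
    {ι : Type*} (s : Finset ι) (f : ι → M₂ →ₗ[R] M₃) (g : M₁ →ₗ[R] M₂) :
    (∑ i ∈ s, f i).comp g = ∑ i ∈ s, (f i).comp g := by
  ext x
  simp [LinearMap.coe_sum, Finset.sum_apply]

private lemma lm_comp_sum {R : Type*} [Semiring R] {M₁ M₂ M₃ : Type*}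
    [AddCommMonoid M₁] [AddCommMonoid M₂] [AddCommMonoid M₃]
    [Module R M₁] [Module R M₂] [Module R M₃]
    {ι : Type*} (s : Finset ι) (g : M₂ →ₗ[R] M₃) (f : ι → M₁ →ₗ[R] M₂) :
    g.comp (∑ i ∈ s, f i) = ∑ i ∈ s, g.comp (f i) := by
  ext x
  simp [LinearMap.coe_sum, Finset.sum_apply]

theorem stmt_9
    {𝕂 : Type*} [RCLike 𝕂]
    {B B' : Type*} [AddCommGroup B] [Module 𝕂 B]
    [AddCommGroup B'] [Module 𝕂 B']
    (L : ℕ → B →ₗ[𝕂] B')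
    (Sb S : ℕ → B →ₗ[𝕂] B')
    (N Nc : ℕ → Submodule 𝕂 B)
    (R Rc : ℕ → Submodule 𝕂 B')
    (P : ℕ → B' →ₗ[𝕂] B')
    (T : ℕ → B' →ₗ[𝕂] B)
    (E M : ℕ → ℕ → B →ₗ[𝕂] B)
    (hL : ∃ i, L i ≠ 0)
    (hN0 : N 0 = ⊤) (hRc0 : Rc 0 = ⊤)
    (hSb1 : Sb 1 = L 0)
    (hSbrec : ∀ k, 1 ≤ k → Sb (k + 1) = ∑ i ∈ Finset.Icc 1 k, (L i).comp (M i k))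
    (hSdef : ∀ k, S (k + 1) = Sb (k + 1) - ∑ i ∈ Finset.Icc 1 k, (P i).comp (Sb (k + 1)))
    (hNdef : ∀ k, N (k + 1) = LinearMap.ker (S (k + 1)) ⊓ N k)
    (hRdef : ∀ k, R (k + 1) = Submodule.map (S (k + 1)) (N k))
    (hNcompl : ∀ k, Disjoint (Nc (k + 1)) (N (k + 1)) ∧ Nc (k + 1) ⊔ N (k + 1) = N k)
    (hRcompl : ∀ k, Disjoint (R (k + 1)) (Rc (k + 1)) ∧ R (k + 1) ⊔ Rc (k + 1) = Rc k)
    (hPrange : ∀ i, 1 ≤ i → LinearMap.range (P i) ≤ R i)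
    (hPid : ∀ i, 1 ≤ i → ∀ y ∈ R i, P i y = y)
    (hPzeroRc : ∀ i, 1 ≤ i → ∀ y ∈ Rc i, P i y = 0)
    (hPzeroR : ∀ i j, 1 ≤ j → j < i → ∀ y ∈ R j, P i y = 0)
    (hTrange : ∀ i, 1 ≤ i → ∀ y, T i y ∈ Nc i)
    (hTS : ∀ i, 1 ≤ i → ∀ x ∈ Nc i, T i (S i x) = x)
    (hST : ∀ i, 1 ≤ i → ∀ y, S i (T i y) = P i y)
    (hE11 : E 1 1 = LinearMap.id)
    (hEdiag : ∀ k, E (k + 1) (k + 1) = LinearMap.id)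
    (hErec : ∀ k i, 1 ≤ i → i ≤ k →
      E i (k + 1) = -((T i).comp (∑ v ∈ Finset.Icc (i + 1) (k + 1), (Sb v).comp (E v (k + 1)))))
    (hM11 : M 1 1 = LinearMap.id)
    (hM1 : ∀ k, 1 ≤ k → M 1 (k + 1) = E 1 (k + 1))
    (hMrec : ∀ k a, 2 ≤ a → a ≤ k + 1 →
      M a (k + 1) = ∑ b ∈ Finset.Icc (a - 1) k, (M (a - 1) b).comp (E (b + 1) (k + 1)))
    (rank : B → ℕ∞)
    (hrank : ∀ b0 : B, rank b0 = sSup {x : ℕ∞ | ∃ m : ℕ, 1 ≤ m ∧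
      (∃ b : ℕ → B, b 0 = b0 ∧
        ∀ l, l + 1 ≤ m → ∑ i ∈ Finset.range (l + 1), L i (b (l - i)) = 0) ∧ x = (m : ℕ∞)})
    (k : ℕ)
    (hstab : (∀ b0 : B, rank b0 ≤ (k : ℕ∞) ∨ rank b0 = ⊤) ∧ ∃ b0 : B, rank b0 = (k : ℕ∞))
    (φ : ℕ → B →ₗ[𝕂] B)
    (hφ0 : φ 0 = LinearMap.id)
    (hφ : ∀ i, 1 ≤ i → φ i = M (k + 1) (k + 1 + i))
    :
    (∀ l : ℕ, ∑ i ∈ Finset.range (l + 1), (L i).comp (φ (l - i)) = S (l + 1)) ∧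
    (∀ i, 1 ≤ i → i ≤ k + 1 →
      Submodule.map (S i) (⨆ j ∈ Finset.Icc 1 (i - 1), Nc j) ≤ Rc (i - 1) ∧
      Submodule.map (S i) (Nc i) = R i ∧
      ∀ x ∈ N i, S i x = 0) ∧
    (∀ l, 2 ≤ l → LinearMap.range (S (k + l)) ≤ Rc (k + 1) ∧
      ∀ x ∈ N (k + 1), S (k + l) x = 0) ∧
    (∀ i, 1 ≤ i → ∀ x ∈ N (k + 1), S i x = 0) := by
  classical
  set Q : ℕ → Submodule 𝕂 B' := fun n => ⨆ j ∈ Finset.Icc 1 n, R j with hQdef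
  -- ### basic structural facts
  have hS1 : S 1 = L 0 := by
    have h := hSdef 0
    rwa [show Finset.Icc 1 0 = (∅ : Finset ℕ) from Finset.Icc_eq_empty (by omega),
      Finset.sum_empty, sub_zero, hSb1] at h
  have hRRc0 : ∀ n, R (n + 1) ≤ Rc n := fun n => le_of_le_of_eq le_sup_left (hRcompl n).2
  have hRcRc : ∀ n, Rc (n + 1) ≤ Rc n := fun n => le_of_le_of_eq le_sup_right (hRcompl n).2
  have hRc_mono : ∀ {m n : ℕ}, m ≤ n → Rc n ≤ Rc m := by
    intro m n h
    obtain ⟨j, rfl⟩ := Nat.exists_eq_add_of_le h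
    induction j with
    | zero => exact le_rfl
    | succ j ih => exact le_trans (by rw [← Nat.add_assoc]; exact hRcRc (m+j)) (ih (by omega))
  have hRRc : ∀ j t, t < j → R j ≤ Rc t := by
    intro j t h
    obtain ⟨j', rfl⟩ : ∃ j', j = j' + 1 := ⟨j - 1, by omega⟩
    exact le_trans (hRRc0 j') (hRc_mono (by omega))
  have hNN : ∀ n, N (n + 1) ≤ N n := fun n => by rw [hNdef n]; exact inf_le_right
  have hN_mono : ∀ {m n : ℕ}, m ≤ n → N n ≤ N m := by
    intro m n h
    obtain ⟨j, rfl⟩ := Nat.exists_eq_add_of_le h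
    induction j with
    | zero => exact le_rfl
    | succ j ih => exact le_trans (by rw [← Nat.add_assoc]; exact hNN (m+j)) (ih (by omega))
  have hNker : ∀ j m, 1 ≤ j → j ≤ m → ∀ x ∈ N m, S j x = 0 := by
    intro j m h1 hjm x hx
    obtain ⟨j', rfl⟩ : ∃ j', j = j' + 1 := ⟨j - 1, by omega⟩
    have hx' : x ∈ N (j' + 1) := hN_mono hjm hx
    rw [hNdef j'] at hx'
    exact LinearMap.mem_ker.mp hx'.1
  have hNcN : ∀ v, Nc (v + 1) ≤ N v := fun v => le_of_le_of_eq le_sup_left (hNcompl v).2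
  have hPP0 : ∀ i j y, 1 ≤ i → 1 ≤ j → j ≠ i → P i (P j y) = 0 := by
    intro i j y hi hj hne
    have hy : P j y ∈ R j := hPrange j hj ⟨y, rfl⟩
    rcases lt_or_gt_of_ne hne with h | h
    · exact hPzeroR i j hj h _ hy
    · exact hPzeroRc i hi _ (hRRc j i h hy)
  have hPidem : ∀ i y, 1 ≤ i → P i (P i y) = P i y :=
    fun i y hi => hPid i hi _ (hPrange i hi ⟨y, rfl⟩)
  have hRQ : ∀ j n, 1 ≤ j → j ≤ n → R j ≤ Q n := by
    intro j n h1 h2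
    exact le_iSup₂_of_le j (Finset.mem_Icc.mpr ⟨h1, h2⟩) le_rfl
  have hQmono : ∀ {m n : ℕ}, m ≤ n → Q m ≤ Q n := by
    intro m n h
    refine iSup₂_le fun j hj => ?_
    obtain ⟨hj1, hj2⟩ := Finset.mem_Icc.mp hj
    exact hRQ j n hj1 (le_trans hj2 h)
  have hSumP : ∀ n w, w ∈ Q n → ∑ j ∈ Finset.Icc 1 n, P j w = w := by
    intro n w hw
    have key : Q n ≤ LinearMap.ker ((∑ j ∈ Finset.Icc 1 n, P j) - LinearMap.id) := by
      refine iSup₂_le fun t ht => ?_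
      obtain ⟨ht1, ht2⟩ := Finset.mem_Icc.mp ht
      intro y hy
      simp only [LinearMap.mem_ker, LinearMap.sub_apply, LinearMap.id_apply,
        LinearMap.coe_sum, Finset.sum_apply, sub_eq_zero]
      rw [Finset.sum_eq_single_of_mem t ht]
      · exact hPid t ht1 y hy
      · intro j hj hne
        obtain ⟨hj1, hj2⟩ := Finset.mem_Icc.mp hj
        rcases lt_or_gt_of_ne hne with h | h
        · exact hPzeroRc j hj1 y (hRRc t j h hy)
        · exact hPzeroR j t ht1 h y hy
    have h2 := key hw
    simp only [LinearMap.mem_ker, LinearMap.sub_apply, LinearMap.id_apply,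
      LinearMap.coe_sum, Finset.sum_apply, sub_eq_zero] at h2
    exact h2
  have hPkillQ : ∀ i n, 1 ≤ i → n < i → ∀ w ∈ Q n, P i w = 0 := by
    intro i n hi h w hw
    have key : Q n ≤ LinearMap.ker (P i) := by
      refine iSup₂_le fun t ht => ?_
      obtain ⟨ht1, ht2⟩ := Finset.mem_Icc.mp ht
      intro y hy
      exact LinearMap.mem_ker.mpr (hPzeroR i t ht1 (by omega) y hy)
    exact LinearMap.mem_ker.mp (key hw)
  have hF1 : ∀ n y, y - ∑ j ∈ Finset.Icc 1 n, P j y ∈ Rc n := by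
    intro n
    induction n with
    | zero => intro y; rw [hRc0]; trivial
    | succ n ih =>
      intro y
      have hz := ih y
      rw [← (hRcompl n).2] at hz
      obtain ⟨r, hr, c, hc, hrc⟩ := Submodule.mem_sup.mp hz
      have hPz : P (n + 1) (y - ∑ j ∈ Finset.Icc 1 n, P j y) = r := by
        rw [← hrc, map_add, hPid (n + 1) (by omega) r hr,
          hPzeroRc (n + 1) (by omega) c hc, add_zero]
      have hPsum : P (n + 1) (∑ j ∈ Finset.Icc 1 n, P j y) = 0 := by
        rw [map_sum]
        refine Finset.sum_eq_zero fun j hj => ?_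
        obtain ⟨hj1, hj2⟩ := Finset.mem_Icc.mp hj
        exact hPP0 (n + 1) j y (by omega) hj1 (by omega)
      have hPy : P (n + 1) y = r := by
        rw [map_sub, hPsum, sub_zero] at hPz
        exact hPz
      have e1 : y - ∑ j ∈ Finset.Icc 1 (n + 1), P j y = c := by
        rw [Finset.sum_Icc_succ_top (by omega : 1 ≤ n + 1), hPy]
        have h2 : y - (∑ j ∈ Finset.Icc 1 n, P j y + r)
            = (y - ∑ j ∈ Finset.Icc 1 n, P j y) - r := by abel
        rw [h2, ← hrc]
        abel
      rw [e1]
      exact hc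
  have hSapp : ∀ v, 1 ≤ v → ∀ x, S v x = Sb v x - ∑ j ∈ Finset.Icc 1 (v - 1), P j (Sb v x) := by
    intro v hv x
    obtain ⟨u, rfl⟩ : ∃ u, v = u + 1 := ⟨v - 1, by omega⟩
    rw [hSdef u]
    simp [LinearMap.sub_apply, LinearMap.coe_sum, Finset.sum_apply]
  have hSRc : ∀ v, 1 ≤ v → ∀ x, S v x ∈ Rc (v - 1) := by
    intro v hv x
    rw [hSapp v hv x]
    exact hF1 (v - 1) (Sb v x)
  have hRsum : ∀ u x, x ∈ N u → Sb (u + 1) x ∈ Q (u + 1) := by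
    intro u x hx
    have e : Sb (u + 1) x = S (u + 1) x + ∑ j ∈ Finset.Icc 1 u, P j (Sb (u + 1) x) := by
      rw [hSapp (u + 1) (by omega) x]
      simp
    rw [e]
    refine Submodule.add_mem _ ?_ ?_
    · exact hRQ (u + 1) (u + 1) (by omega) le_rfl (by rw [hRdef u]; exact ⟨x, hx, rfl⟩)
    · refine Submodule.sum_mem _ fun j hj => ?_
      obtain ⟨h1, h2⟩ := Finset.mem_Icc.mp hj
      exact hRQ j (u + 1) h1 (by omega) (hPrange j h1 ⟨_, rfl⟩)
  have hMdiag : ∀ m, 1 ≤ m → M m m = LinearMap.id := by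
    intro m hm
    induction m with
    | zero => omega
    | succ m ih =>
      rcases Nat.lt_or_ge m 1 with h | h
      · interval_cases m
        exact hM11
      · rw [hMrec m (m + 1) (by omega) le_rfl]
        rw [show m + 1 - 1 = m from rfl, Finset.Icc_self, Finset.sum_singleton,
          ih h, hEdiag m]
        simp
  have hEdiag' : ∀ m, 1 ≤ m → E m m = LinearMap.id := by
    intro m hm
    obtain ⟨u, rfl⟩ : ∃ u, m = u + 1 := ⟨m - 1, by omega⟩
    exact hEdiag u
  have hENc : ∀ n i x, 1 ≤ i → i < n → E i n x ∈ Nc i := by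
    intro n i x h1 h2
    obtain ⟨u, rfl⟩ : ∃ u, n = u + 1 := ⟨n - 1, by omega⟩
    rw [hErec u i h1 (by omega)]
    simp only [LinearMap.neg_apply, LinearMap.comp_apply]
    exact Submodule.neg_mem _ (hTrange i h1 _)
  have hEN : ∀ n i x, 1 ≤ i → i < n → E i n x ∈ N (i - 1) := by
    intro n i x h1 h2
    obtain ⟨u, rfl⟩ : ∃ u, i = u + 1 := ⟨i - 1, by omega⟩
    simpa using hNcN u (hENc n (u + 1) x h1 h2)
  -- ### Lemma D : ∑_{v∈[1,n]} Sb v ∘ E v n = S n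
  have hD : ∀ n, 1 ≤ n → ∑ v ∈ Finset.Icc 1 n, (Sb v).comp (E v n) = S n := by
    intro n hn
    rcases Nat.lt_or_ge n 2 with h2 | h2
    · interval_cases n
      rw [Finset.Icc_self, Finset.sum_singleton, hE11, hSb1, hS1]
      simp
    · obtain ⟨m, rfl⟩ : ∃ m, n = m + 1 := ⟨n - 1, by omega⟩
      have hm : 1 ≤ m := by omega
      apply LinearMap.ext
      intro x
      rw [LinearMap.coe_sum, Finset.sum_apply]
      simp only [LinearMap.comp_apply]
      set Dx := ∑ v ∈ Finset.Icc 1 (m + 1), Sb v (E v (m + 1) x) with hDxdef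
      have hEmem : ∀ v, 1 ≤ v → v ≤ m → Sb v (E v (m + 1) x) ∈ Q v := by
        intro v h1 hvm
        obtain ⟨u, rfl⟩ : ∃ u, v = u + 1 := ⟨v - 1, by omega⟩
        exact hRsum u _ (by simpa using hEN (m + 1) (u + 1) x h1 (by omega))
      have hw : (∑ v ∈ Finset.Icc 1 m, Sb v (E v (m + 1) x)) ∈ Q m := by
        refine Submodule.sum_mem _ fun v hv => ?_
        obtain ⟨h1, h2⟩ := Finset.mem_Icc.mp hv
        exact hQmono h2 (hEmem v h1 h2)
      have hsplit : Dx = (∑ v ∈ Finset.Icc 1 m, Sb v (E v (m + 1) x)) + Sb (m + 1) x := by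
        rw [hDxdef, Finset.sum_Icc_succ_top (by omega : 1 ≤ m + 1), hEdiag' (m + 1) (by omega)]
        simp
      have hPD : ∀ i, 1 ≤ i → i ≤ m → P i Dx = 0 := by
        intro i h1 h2
        obtain ⟨i', rfl⟩ : ∃ i', i = i' + 1 := ⟨i - 1, by omega⟩
        have esplit : Dx = (∑ v ∈ Finset.Icc 1 i', Sb v (E v (m + 1) x))
            + ∑ v ∈ Finset.Icc (i' + 1) (m + 1), Sb v (E v (m + 1) x) :=
          icc_split_aux _ (by omega) (by omega)
        set g : B' := ∑ v ∈ Finset.Icc (i' + 1 + 1) (m + 1), Sb v (E v (m + 1) x) with hgdef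
        have esplit2 : ∑ v ∈ Finset.Icc (i' + 1) (m + 1), Sb v (E v (m + 1) x)
            = Sb (i' + 1) (E (i' + 1) (m + 1) x) + g := by
          rw [hgdef, icc_split_aux (fun v => Sb v (E v (m + 1) x)) (by omega : i' + 1 ≤ i' + 1 + 1)
            (by omega : i' + 1 ≤ m + 1)]
          rw [Finset.Icc_self, Finset.sum_singleton]
        -- E (i'+1) (m+1) x = - T (i'+1) g
        have hEg : E (i' + 1) (m + 1) x = -(T (i' + 1) g) := by
          rw [hErec m (i' + 1) (by omega) (by omega)]
          simp only [LinearMap.neg_apply, LinearMap.comp_apply, LinearMap.coe_sum,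
            Finset.sum_apply]
          rfl
        have hPSb : ∀ y, P (i' + 1) (Sb (i' + 1) y) = P (i' + 1) (S (i' + 1) y) := by
          intro y
          rw [hSapp (i' + 1) (by omega) y, map_sub, map_sum]
          rw [Finset.sum_eq_zero fun j hj => ?_, sub_zero]
          obtain ⟨hj1, hj2⟩ := Finset.mem_Icc.mp hj
          exact hPP0 (i' + 1) j _ (by omega) hj1 (by simp at hj2 ⊢; omega)
        have hkey : P (i' + 1) (Sb (i' + 1) (E (i' + 1) (m + 1) x)) = -(P (i' + 1) g) := by
          rw [hPSb, hEg, map_neg, hST (i' + 1) (by omega) g, map_neg,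
            hPidem (i' + 1) g (by omega)]
        have hfirst : P (i' + 1) (∑ v ∈ Finset.Icc 1 i', Sb v (E v (m + 1) x)) = 0 := by
          refine hPkillQ (i' + 1) i' (by omega) (by omega) _ ?_
          refine Submodule.sum_mem _ fun v hv => ?_
          obtain ⟨h1', h2'⟩ := Finset.mem_Icc.mp hv
          exact hQmono h2' (hEmem v h1' (by omega))
        rw [esplit, map_add, hfirst, zero_add, esplit2, map_add, hkey]
        abel
      -- conclude
      have hfin : S (m + 1) x = Dx := by
        have hSb : Sb (m + 1) x = Dx - ∑ v ∈ Finset.Icc 1 m, Sb v (E v (m + 1) x) := by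
          rw [hsplit]; abel
        rw [hSapp (m + 1) (by omega) x, show m + 1 - 1 = m from rfl, hSb]
        have : ∀ j ∈ Finset.Icc 1 m,
            P j (Dx - ∑ v ∈ Finset.Icc 1 m, Sb v (E v (m + 1) x))
              = -(P j (∑ v ∈ Finset.Icc 1 m, Sb v (E v (m + 1) x))) := by
          intro j hj
          obtain ⟨hj1, hj2⟩ := Finset.mem_Icc.mp hj
          rw [map_sub, hPD j hj1 hj2, zero_sub]
        rw [Finset.sum_congr rfl this, Finset.sum_neg_distrib, hSumP m _ hw]
        abel
      exact hfin.symm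
  -- ### Theorem A : ∑_i L i ∘ M (a+i) n = S (n-a+1)
  have hA : ∀ n a, 1 ≤ a → a ≤ n →
      ∑ i ∈ Finset.range (n - a + 1), (L i).comp (M (a + i) n) = S (n - a + 1) := by
    intro n
    induction n using Nat.strong_induction_on with
    | _ n ih =>
      intro a ha han
      rcases eq_or_lt_of_le han with rfl | hlt
      · -- a = n
        rw [Nat.sub_self, Finset.range_one, Finset.sum_singleton, Nat.add_zero,
          hMdiag a ha, LinearMap.comp_id, hS1]
      · -- a < n ; write n = m + 1 with m ≥ 1
        obtain ⟨m, rfl⟩ : ∃ m, n = m + 1 := ⟨n - 1, by omega⟩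
        have hm : 1 ≤ m := by omega
        rcases eq_or_lt_of_le ha with h1 | h2
        · -- a = 1 : reduces to Lemma D
          subst h1
          rw [show m + 1 - 1 + 1 = m + 1 from by omega]
          have step1 : ∑ i ∈ Finset.range (m + 1), (L i).comp (M (1 + i) (m + 1))
              = (Sb 1).comp (E 1 (m + 1))
                + ∑ i ∈ Finset.Icc 1 m, (L i).comp (M (1 + i) (m + 1)) := by
            rw [range_split_zero_aux (fun i => (L i).comp (M (1 + i) (m + 1))) m]
            rw [Nat.add_zero, hM1 m hm, hSb1]
          have step2 : ∀ i ∈ Finset.Icc 1 m, (L i).comp (M (1 + i) (m + 1))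
              = ∑ b ∈ Finset.Icc i m, ((L i).comp (M i b)).comp (E (b + 1) (m + 1)) := by
            intro i hi
            obtain ⟨hi1, hi2⟩ := Finset.mem_Icc.mp hi
            rw [hMrec m (1 + i) (by omega) (by omega),
              show 1 + i - 1 = i from by omega, lm_comp_sum]
            exact Finset.sum_congr rfl fun b hb => by rw [LinearMap.comp_assoc]
          rw [step1, Finset.sum_congr rfl step2]
          rw [Finset.sum_comm' (t' := Finset.Icc 1 m) (s' := fun b => Finset.Icc 1 b)
            (fun i b => by simp only [Finset.mem_Icc]; omega)]
          have step3 : ∀ b ∈ Finset.Icc 1 m,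
              ∑ i ∈ Finset.Icc 1 b, ((L i).comp (M i b)).comp (E (b + 1) (m + 1))
                = (Sb (b + 1)).comp (E (b + 1) (m + 1)) := by
            intro b hb
            obtain ⟨hb1, hb2⟩ := Finset.mem_Icc.mp hb
            rw [← lm_sum_comp _ _ _, ← hSbrec b hb1]
          rw [Finset.sum_congr rfl step3]
          rw [← hD (m + 1) (by omega)]
          rw [icc_split_aux (fun v => (Sb v).comp (E v (m + 1))) (by omega : 1 ≤ 1 + 1)
            (by omega : 1 ≤ m + 1), Finset.Icc_self, Finset.sum_singleton]
          rw [icc_shift_aux (fun v => (Sb v).comp (E v (m + 1))) 1 m]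
        · -- 2 ≤ a < m + 1
          have step2 : ∀ i ∈ Finset.range (m + 1 - a + 1), (L i).comp (M (a + i) (m + 1))
              = ∑ b ∈ Finset.Icc (a - 1 + i) m,
                  ((L i).comp (M (a - 1 + i) b)).comp (E (b + 1) (m + 1)) := by
            intro i hi
            have hi' : i ≤ m + 1 - a := by simpa using Nat.lt_succ_iff.mp (Finset.mem_range.mp hi)
            rw [hMrec m (a + i) (by omega) (by omega), show a + i - 1 = a - 1 + i from by omega,
              lm_comp_sum]
            exact Finset.sum_congr rfl fun b hb => by rw [LinearMap.comp_assoc]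
          rw [Finset.sum_congr rfl step2]
          rw [Finset.sum_comm' (t' := Finset.Icc (a - 1) m)
            (s' := fun b => Finset.range (b - (a - 1) + 1))
            (fun i b => by simp only [Finset.mem_Icc, Finset.mem_range]; omega)]
          have step3 : ∀ b ∈ Finset.Icc (a - 1) m,
              ∑ i ∈ Finset.range (b - (a - 1) + 1),
                ((L i).comp (M (a - 1 + i) b)).comp (E (b + 1) (m + 1))
              = (S (b - (a - 1) + 1)).comp (E (b + 1) (m + 1)) := by
            intro b hb
            obtain ⟨hb1, hb2⟩ := Finset.mem_Icc.mp hb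
            rw [← lm_sum_comp _ _ _, ih b (by omega) (a - 1) (by omega) hb1]
          rw [Finset.sum_congr rfl step3]
          obtain ⟨w, rfl⟩ : ∃ w, m = w + 1 := ⟨m - 1, by omega⟩
          have hzero : ∀ b ∈ Finset.Icc (a - 1) w,
              (S (b - (a - 1) + 1)).comp (E (b + 1) (w + 1 + 1)) = 0 := by
            intro b hb
            obtain ⟨hb1, hb2⟩ := Finset.mem_Icc.mp hb
            apply LinearMap.ext; intro x
            simp only [LinearMap.comp_apply, LinearMap.zero_apply]
            refine hNker (b - (a - 1) + 1) b (by omega) (by omega) _ ?_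
            have hmem := hEN (w + 1 + 1) (b + 1) x (by omega) (by omega)
            simpa using hmem
          rw [Finset.sum_Icc_succ_top (by omega : a - 1 ≤ w + 1)]
          rw [Finset.sum_eq_zero hzero, zero_add, hEdiag (w + 1), LinearMap.comp_id,
            show w + 1 - (a - 1) + 1 = w + 1 + 1 - a + 1 from by omega]
  -- ### P1 : canonical Jordan chains for roots in N m
  have hP1 : ∀ m x, x ∈ N m → ∀ l, l + 1 ≤ m →
      ∑ i ∈ Finset.range (l + 1), L i (M (m - (l - i)) m x) = 0 := by
    intro m x hx l hl
    have e : ∀ i ∈ Finset.range (l + 1), L i (M (m - (l - i)) m x)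
        = ((L i).comp (M ((m - l) + i) m)) x := by
      intro i hi
      have hi' : i ≤ l := Nat.lt_succ_iff.mp (Finset.mem_range.mp hi)
      rw [show m - (l - i) = (m - l) + i from by omega]
      rfl
    rw [Finset.sum_congr rfl e, ← Finset.sum_apply, ← LinearMap.coe_sum]
    rw [show l + 1 = m - (m - l) + 1 from by omega]
    rw [hA m (m - l) (by omega) (by omega)]
    rw [show m - (m - l) + 1 = l + 1 from by omega]
    exact hNker (l + 1) m (by omega) hl x hx
  -- ### P2 and W by simultaneous induction
  have hP2W : ∀ m,
      (∀ b : ℕ → B, (∀ l, l + 1 ≤ m + 1 →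
          ∑ i ∈ Finset.range (l + 1), L i (b (l - i)) = 0) → b 0 ∈ N (m + 1))
      ∧ (∀ e : ℕ → B, (∀ l, l + 1 ≤ m →
          ∑ i ∈ Finset.range (l + 1), L i (e (l - i)) = 0) →
          (∑ i ∈ Finset.Icc 1 m, L i (e (m - i))) ∈ Q (m + 1)) := by
    intro m
    induction m with
    | zero =>
      constructor
      · intro b hb
        have h0 : L 0 (b 0) = 0 := by simpa using hb 0 (by omega)
        rw [hNdef 0]
        refine ⟨LinearMap.mem_ker.mpr ?_, by rw [hN0]; trivial⟩
        rw [hS1]; exact h0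
      · intro e he
        rw [show Finset.Icc 1 0 = (∅ : Finset ℕ) from Finset.Icc_eq_empty (by omega),
          Finset.sum_empty]
        exact Submodule.zero_mem _
    | succ m ih =>
      obtain ⟨ihP2, ihW⟩ := ih
      -- common d-sum computation for chains of length m+1 with root 0
      have hDsum : ∀ d : ℕ → B, d 0 = 0 →
          (∀ l, l + 1 ≤ m + 1 → ∑ i ∈ Finset.range (l + 1), L i (d (l - i)) = 0) →
          (∑ i ∈ Finset.Icc 1 (m + 1), L i (d (m + 1 - i))) ∈ Q (m + 1) := by
        intro d hd0 hd
        have hsplit : ∑ i ∈ Finset.Icc 1 (m + 1), L i (d (m + 1 - i))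
            = (∑ i ∈ Finset.Icc 1 m, L i (d (m + 1 - i))) + L (m + 1) (d 0) := by
          rw [Finset.sum_Icc_succ_top (by omega : 1 ≤ m + 1)]
          simp
        have hfshift : ∀ i ∈ Finset.Icc 1 m, L i (d (m + 1 - i)) = L i ((fun t => d (t + 1)) (m - i)) := by
          intro i hi
          obtain ⟨hi1, hi2⟩ := Finset.mem_Icc.mp hi
          rw [show m + 1 - i = m - i + 1 from by omega]
        have hfchain : ∀ l, l + 1 ≤ m →
            ∑ i ∈ Finset.range (l + 1), L i ((fun t => d (t + 1)) (l - i)) = 0 := by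
          intro l hlm
          have h2 := hd (l + 1) (by omega)
          rw [Finset.sum_range_succ] at h2
          rw [show l + 1 - (l + 1) = 0 from by omega, hd0, map_zero, add_zero] at h2
          rw [← h2]
          refine Finset.sum_congr rfl fun i hi => ?_
          have hi' : i ≤ l := Nat.lt_succ_iff.mp (Finset.mem_range.mp hi)
          simp only []
          rw [show l - i + 1 = l + 1 - i from by omega]
        rw [hsplit, hd0, map_zero, add_zero, Finset.sum_congr rfl hfshift]
        exact hQmono (by omega) (ihW (fun t => d (t + 1)) hfchain)
      constructor
      · -- P2 (m+2)
        intro b hb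
        have hb0 : b 0 ∈ N (m + 1) := ihP2 b (fun l hl => hb l (by omega))
        have hcchain := hP1 (m + 1) (b 0) hb0
        have hdchain : ∀ l, l + 1 ≤ m + 1 →
            ∑ i ∈ Finset.range (l + 1),
              L i ((fun t => b t - M (m + 1 - t) (m + 1) (b 0)) (l - i)) = 0 := by
          intro l hl
          simp only [map_sub]
          rw [Finset.sum_sub_distrib, hb l (by omega), hcchain l hl, sub_zero]
        have hd0 : (fun t => b t - M (m + 1 - t) (m + 1) (b 0)) 0 = 0 := by
          simp only [Nat.sub_zero]
          rw [hMdiag (m + 1) (by omega)]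
          simp
        have hdmem := hDsum (fun t => b t - M (m + 1 - t) (m + 1) (b 0)) hd0 hdchain
        -- top chain condition of b
        have htop := hb (m + 1) (by omega)
        rw [range_split_zero_aux (fun i => L i (b (m + 1 - i))) (m + 1)] at htop
        -- Sb (m+2) (b 0) in terms of the pieces
        have hSbval : Sb (m + 1 + 1) (b 0)
            = ∑ i ∈ Finset.Icc 1 (m + 1), L i (M (m + 1 - (m + 1 - i)) (m + 1) (b 0)) := by
          rw [hSbrec (m + 1) (by omega), LinearMap.coe_sum, Finset.sum_apply]
          refine Finset.sum_congr rfl fun i hi => ?_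
          obtain ⟨hi1, hi2⟩ := Finset.mem_Icc.mp hi
          rw [show m + 1 - (m + 1 - i) = i from by omega]
          rfl
        have hkey : Sb (m + 1 + 1) (b 0)
            = (∑ i ∈ Finset.Icc 1 (m + 1), L i (b (m + 1 - i)))
              - ∑ i ∈ Finset.Icc 1 (m + 1),
                  L i ((fun t => b t - M (m + 1 - t) (m + 1) (b 0)) (m + 1 - i)) := by
          rw [hSbval, ← Finset.sum_sub_distrib]
          refine Finset.sum_congr rfl fun i hi => ?_
          simp only [map_sub]
          abel
        have hmem : Sb (m + 1 + 1) (b 0) ∈ Q (m + 1) := by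
          rw [hkey]
          refine Submodule.sub_mem _ ?_ hdmem
          have hb1 : ∑ i ∈ Finset.Icc 1 (m + 1), L i (b (m + 1 - i)) = -(L 0 (b (m + 1))) := by
            have h2 := htop
            simp only [Nat.sub_zero] at h2
            exact eq_neg_of_add_eq_zero_right h2
          rw [hb1]
          refine Submodule.neg_mem _ ?_
          have : L 0 (b (m + 1)) ∈ R 1 := by
            rw [hRdef 0, ← hS1]
            exact ⟨b (m + 1), by rw [hN0]; trivial, rfl⟩
          exact hRQ 1 (m + 1) (by omega) (by omega) this
        have hS0 : S (m + 1 + 1) (b 0) = 0 := by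
          rw [hSapp (m + 1 + 1) (by omega) (b 0),
            show m + 1 + 1 - 1 = m + 1 from rfl, hSumP (m + 1) _ hmem, sub_self]
        rw [hNdef (m + 1)]
        exact ⟨LinearMap.mem_ker.mpr hS0, hb0⟩
      · -- W (m+1)
        intro e he
        have he0 : e 0 ∈ N (m + 1) := ihP2 e he
        have hcchain := hP1 (m + 1) (e 0) he0
        have hdchain : ∀ l, l + 1 ≤ m + 1 →
            ∑ i ∈ Finset.range (l + 1),
              L i ((fun t => e t - M (m + 1 - t) (m + 1) (e 0)) (l - i)) = 0 := by
          intro l hl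
          simp only [map_sub]
          rw [Finset.sum_sub_distrib, he l hl, hcchain l hl, sub_zero]
        have hd0 : (fun t => e t - M (m + 1 - t) (m + 1) (e 0)) 0 = 0 := by
          simp only [Nat.sub_zero]
          rw [hMdiag (m + 1) (by omega)]
          simp
        have hdmem := hDsum (fun t => e t - M (m + 1 - t) (m + 1) (e 0)) hd0 hdchain
        have hSbval : Sb (m + 1 + 1) (e 0)
            = ∑ i ∈ Finset.Icc 1 (m + 1), L i (M (m + 1 - (m + 1 - i)) (m + 1) (e 0)) := by
          rw [hSbrec (m + 1) (by omega), LinearMap.coe_sum, Finset.sum_apply]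
          refine Finset.sum_congr rfl fun i hi => ?_
          obtain ⟨hi1, hi2⟩ := Finset.mem_Icc.mp hi
          rw [show m + 1 - (m + 1 - i) = i from by omega]
          rfl
        have hkey : ∑ i ∈ Finset.Icc 1 (m + 1), L i (e (m + 1 - i))
            = Sb (m + 1 + 1) (e 0)
              + ∑ i ∈ Finset.Icc 1 (m + 1),
                  L i ((fun t => e t - M (m + 1 - t) (m + 1) (e 0)) (m + 1 - i)) := by
          rw [hSbval, ← Finset.sum_add_distrib]
          refine Finset.sum_congr rfl fun i hi => ?_
          simp only [map_sub]
          abel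
        rw [hkey]
        exact Submodule.add_mem _ (hRsum (m + 1) (e 0) he0) (hQmono (by omega) hdmem)
  -- ### stabilization consequences
  have hchainN : ∀ m, 1 ≤ m → ∀ b : ℕ → B,
      (∀ l, l + 1 ≤ m → ∑ i ∈ Finset.range (l + 1), L i (b (l - i)) = 0) → b 0 ∈ N m := by
    intro m hm b hb
    obtain ⟨m', rfl⟩ : ∃ m', m = m' + 1 := ⟨m - 1, by omega⟩
    exact (hP2W m').1 b hb
  have hNchain : ∀ m x, 1 ≤ m → x ∈ N m →
      ∃ b : ℕ → B, b 0 = x ∧ ∀ l, l + 1 ≤ m →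
        ∑ i ∈ Finset.range (l + 1), L i (b (l - i)) = 0 := by
    intro m x hm hx
    refine ⟨fun t => M (m - t) m x, ?_, hP1 m x hx⟩
    simp only [Nat.sub_zero]
    rw [hMdiag m hm]
    rfl
  have hrank_top : ∀ x, x ∈ N (k + 1) → rank x = ⊤ := by
    intro x hx
    rcases hstab.1 x with h | h
    · exfalso
      obtain ⟨b, hb0, hbc⟩ := hNchain (k + 1) x (by omega) hx
      have hmem : ((k + 1 : ℕ) : ℕ∞) ∈ {y : ℕ∞ | ∃ m : ℕ, 1 ≤ m ∧
          (∃ b : ℕ → B, b 0 = x ∧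
            ∀ l, l + 1 ≤ m → ∑ i ∈ Finset.range (l + 1), L i (b (l - i)) = 0) ∧
          y = (m : ℕ∞)} := ⟨k + 1, by omega, ⟨b, hb0, hbc⟩, rfl⟩
      have hle : ((k + 1 : ℕ) : ℕ∞) ≤ rank x := by
        rw [hrank x]
        exact le_sSup hmem
      have : ((k + 1 : ℕ) : ℕ∞) ≤ (k : ℕ∞) := le_trans hle h
      have : (k + 1 : ℕ) ≤ k := Nat.cast_le.mp this
      omega
    · exact h
  have hNstabLe : ∀ m x, x ∈ N (k + 1) → x ∈ N m := by
    intro m x hx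
    rcases le_or_gt m (k + 1) with h | h
    · exact hN_mono h hx
    · have htop := hrank_top x hx
      have hex : ∃ b : ℕ → B, b 0 = x ∧ ∀ l, l + 1 ≤ m →
          ∑ i ∈ Finset.range (l + 1), L i (b (l - i)) = 0 := by
        by_contra hno
        have hub : rank x ≤ (m : ℕ∞) := by
          rw [hrank x]
          refine sSup_le ?_
          rintro y ⟨m', hm', ⟨b, hb0, hch⟩, rfl⟩
          by_contra hy
          push_neg at hy
          have hmm : m ≤ m' := by
            have := (Nat.cast_lt (α := ℕ∞)).mp hy
            omega
          exact hno ⟨b, hb0, fun l hl => hch l (by omega)⟩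
        rw [htop] at hub
        have : (m : ℕ∞) = ⊤ := top_le_iff.mp hub
        exact (ENat.coe_ne_top m) this
      obtain ⟨b, hb0, hch⟩ := hex
      rw [← hb0]
      exact hchainN m (by omega) b hch
  have hNeq : ∀ m, k + 1 ≤ m → N m = N (k + 1) :=
    fun m hm => le_antisymm (hN_mono hm) (fun x hx => hNstabLe m x hx)
  have hSall : ∀ j, 1 ≤ j → ∀ x ∈ N (k + 1), S j x = 0 :=
    fun j hj x hx => hNker j j hj le_rfl x (hNstabLe j x hx)
  have hRbot : ∀ m, k + 2 ≤ m → R m = ⊥ := by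
    intro m hm
    obtain ⟨u, rfl⟩ : ∃ u, m = u + 1 := ⟨m - 1, by omega⟩
    rw [hRdef u, Submodule.eq_bot_iff]
    rintro y ⟨x, hx, rfl⟩
    rw [hNeq u (by omega)] at hx
    exact hSall (u + 1) (by omega) x hx
  have hPbot : ∀ m, k + 2 ≤ m → P m = 0 := by
    intro m hm
    apply LinearMap.ext
    intro y
    have h := hPrange m (by omega) (⟨y, rfl⟩ : P m y ∈ LinearMap.range (P m))
    rw [hRbot m hm] at h
    simpa using h
  have hNcbot : ∀ m, k + 2 ≤ m → Nc m = ⊥ := by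
    intro m hm
    obtain ⟨u, rfl⟩ : ∃ u, m = u + 1 := ⟨m - 1, by omega⟩
    have h1 := (hNcompl u).1
    have h2 := (hNcompl u).2
    have heq : N u = N (u + 1) := by
      rw [hNeq u (by omega), hNeq (u + 1) (by omega)]
    have hle : Nc (u + 1) ≤ N (u + 1) := by
      rw [← heq, ← h2]
      exact le_sup_left
    exact h1.eq_bot_of_le hle
  have hTbot : ∀ m, k + 2 ≤ m → T m = 0 := by
    intro m hm
    apply LinearMap.ext
    intro y
    have h := hTrange m (by omega) y
    rw [hNcbot m hm] at h
    simpa using h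
  have hEbot : ∀ n i, k + 2 ≤ i → i < n → E i n = 0 := by
    intro n i h1 h2
    obtain ⟨u, rfl⟩ : ∃ u, n = u + 1 := ⟨n - 1, by omega⟩
    rw [hErec u i (by omega) (by omega), hTbot i h1]
    ext x
    simp
  have hMshift : ∀ a n, k + 2 ≤ a → a ≤ n → M a n = M (a - 1) (n - 1) := by
    intro a n h1 h2
    rcases eq_or_lt_of_le h2 with rfl | hlt
    · rw [hMdiag a (by omega), hMdiag (a - 1) (by omega)]
    · obtain ⟨u, rfl⟩ : ∃ u, n = u + 1 := ⟨n - 1, by omega⟩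
      obtain ⟨w, rfl⟩ : ∃ w, u = w + 1 := ⟨u - 1, by omega⟩
      rw [hMrec (w + 1) a (by omega) (by omega)]
      rw [Finset.sum_Icc_succ_top (by omega : a - 1 ≤ w + 1)]
      have hz : ∀ b ∈ Finset.Icc (a - 1) w, (M (a - 1) b).comp (E (b + 1) (w + 1 + 1)) = 0 := by
        intro b hb
        obtain ⟨hb1, hb2⟩ := Finset.mem_Icc.mp hb
        rw [hEbot (w + 1 + 1) (b + 1) (by omega) (by omega)]
        ext x
        simp
      rw [Finset.sum_eq_zero hz, zero_add, hEdiag (w + 1), LinearMap.comp_id,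
        show w + 1 + 1 - 1 = w + 1 from rfl]
  have hMiter : ∀ i j, M (k + 1 + i) (k + 1 + i + j) = M (k + 1) (k + 1 + j) := by
    intro i
    induction i with
    | zero => intro j; rfl
    | succ i ih =>
      intro j
      have h := hMshift (k + 1 + (i + 1)) (k + 1 + (i + 1) + j) (by omega) (by omega)
      rw [show k + 1 + (i + 1) - 1 = k + 1 + i from by omega,
        show k + 1 + (i + 1) + j - 1 = k + 1 + i + j from by omega] at h
      rw [h, ih j]
  -- ### Goal 1
  have goal1 : ∀ l : ℕ, ∑ i ∈ Finset.range (l + 1), (L i).comp (φ (l - i)) = S (l + 1) := by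
    intro l
    have hterm : ∀ i ∈ Finset.range (l + 1),
        (L i).comp (φ (l - i)) = (L i).comp (M (k + 1 + i) (k + 1 + l)) := by
      intro i hi
      have hi' : i ≤ l := Nat.lt_succ_iff.mp (Finset.mem_range.mp hi)
      rcases eq_or_lt_of_le hi' with rfl | hlt
      · rw [Nat.sub_self, hφ0, hMdiag (k + 1 + i) (by omega)]
      · rw [hφ (l - i) (by omega)]
        have h := hMiter i (l - i)
        rw [show k + 1 + i + (l - i) = k + 1 + l from by omega] at h
        rw [h]
    rw [Finset.sum_congr rfl hterm]
    have h := hA (k + 1 + l) (k + 1) (by omega) (by omega)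
    rw [show k + 1 + l - (k + 1) + 1 = l + 1 from by omega] at h
    exact h
  -- ### assemble all goals
  refine ⟨goal1, ?_, ?_, ?_⟩
  · intro i h1 h2
    refine ⟨?_, ?_, ?_⟩
    · intro y hy
      obtain ⟨x, hx, rfl⟩ := Submodule.mem_map.mp hy
      exact hSRc i h1 x
    · obtain ⟨u, rfl⟩ : ∃ u, i = u + 1 := ⟨i - 1, by omega⟩
      have hbot : Submodule.map (S (u + 1)) (N (u + 1)) = ⊥ := by
        rw [Submodule.eq_bot_iff]
        rintro y ⟨x, hx, rfl⟩
        exact hNker (u + 1) (u + 1) (by omega) le_rfl x hx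
      rw [hRdef u, ← (hNcompl u).2, Submodule.map_sup, hbot, sup_bot_eq]
    · exact fun x hx => hNker i i h1 le_rfl x hx
  · intro l hl
    constructor
    · intro y hy
      obtain ⟨x, rfl⟩ := LinearMap.mem_range.mp hy
      have h := hSRc (k + l) (by omega) x
      exact hRc_mono (by omega) h
    · intro x hx
      exact hSall (k + l) (by omega) x hx
  · intro i h1 x hx
    exact hSall i h1 x hx
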